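/- Let d ≥ 1, let ψ : ℝ^d → [0,∞) be continuous with ψ(ξ) → ∞ as ‖ξ‖ → ∞, and let μ be a Borel measure on ℝ^d that is finite on compact sets. Then the following are equivalent: (i) ∫₀ᵀ t² ( ∫_{ℝ^d} sinc²( t·√(ψ(ξ)) ) μ(dξ) ) dt < ∞ for every T > 0; (ii) ∫_{ℝ^d} (1 + ψ(ξ))^{−1} μ(dξ) < ∞. -/

import Mathlib

open MeasureTheory Set Filter

/-- `sinc x = sin x / x` for `x ≠ 0`, `sinc 0 = 1`. -/
noncomputable def sinc (x : ℝ) : ℝ := if x = 0 then 1 else Real.sin x / x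

lemma measurable_sinc : Measurable sinc := by
  unfold sinc
  exact Measurable.ite (measurableSet_eq_fun measurable_id measurable_const)
    measurable_const (Real.measurable_sin.div measurable_id)

lemma sinc_sq_le_one (x : ℝ) : sinc x ^ 2 ≤ 1 := by
  rcases eq_or_ne x 0 with h | h
  · simp [sinc, h]
  · rw [sinc, if_neg h, div_pow, div_le_one (by positivity)]
    exact Real.sin_sq_le_sq

lemma le_sinc {x : ℝ} (h0 : 0 ≤ x) (h1 : x ≤ 1) : 3 / 4 ≤ sinc x := by
  rcases eq_or_lt_of_le h0 with h | h
  · simp [sinc, ← h]; norm_num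
  · rw [sinc, if_neg h.ne', le_div_iff₀ h]
    have h2 := Real.sin_gt_sub_cube h
    nlinarith [sq_nonneg x, mul_pos h h]

lemma lintegral_lower {a : ℝ} (ha : 0 ≤ a) :
    ENNReal.ofReal (3 / 128) * ENNReal.ofReal (1 / (1 + a ^ 2)) ≤
      ∫⁻ t in Ioc (0 : ℝ) 1, ENNReal.ofReal (t ^ 2 * sinc (t * a) ^ 2) := by
  rw [← ENNReal.ofReal_mul (by norm_num)]
  have hmeas : Measurable fun t : ℝ => ENNReal.ofReal (t ^ 2 * sinc (t * a) ^ 2) :=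
    (((measurable_id.pow_const 2).mul
      ((measurable_sinc.comp (measurable_id.mul_const a)).pow_const 2))).ennreal_ofReal
  rcases le_or_gt a 2 with hc | hc
  · -- small a : use sinc ≥ 3/4 on (0, 1/2]
    have step1 : ∫⁻ t in Ioc (0:ℝ) (1/2), ENNReal.ofReal (9/16 * t ^ 2) ≤
        ∫⁻ t in Ioc (0:ℝ) (1/2), ENNReal.ofReal (t ^ 2 * sinc (t * a) ^ 2) := by
      refine setLIntegral_mono hmeas fun t ht => ?_
      refine ENNReal.ofReal_le_ofReal ?_
      have hta0 : 0 ≤ t * a := mul_nonneg ht.1.le ha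
      have hta1 : t * a ≤ 1 := by nlinarith [ht.1, ht.2]
      have hs := le_sinc hta0 hta1
      have h2 : (9:ℝ)/16 ≤ sinc (t*a)^2 := by nlinarith
      calc 9/16 * t^2 = t^2 * (9/16) := by ring
        _ ≤ t^2 * sinc (t*a)^2 := mul_le_mul_of_nonneg_left h2 (sq_nonneg t)
    have step2 : ∫⁻ t in Ioc (0:ℝ) (1/2), ENNReal.ofReal (t ^ 2 * sinc (t * a) ^ 2) ≤
        ∫⁻ t in Ioc (0:ℝ) 1, ENNReal.ofReal (t ^ 2 * sinc (t * a) ^ 2) :=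
      lintegral_mono_set (Ioc_subset_Ioc le_rfl (by norm_num))
    have hval : ∫⁻ t in Ioc (0:ℝ) (1/2), ENNReal.ofReal (9/16 * t ^ 2) =
        ENNReal.ofReal (3 / 128) := by
      rw [← ofReal_integral_eq_lintegral_ofReal
        ((by fun_prop : Continuous fun t : ℝ => 9/16 * t ^ 2).integrableOn_Ioc)
        (Filter.Eventually.of_forall fun t => by positivity)]
      congr 1
      rw [← intervalIntegral.integral_of_le (by norm_num : (0:ℝ) ≤ 1/2)]
      simp [intervalIntegral.integral_const_mul, integral_pow]
      norm_num
    calc ENNReal.ofReal (3/128 * (1/(1+a^2)))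
        ≤ ENNReal.ofReal (3/128) := by
          refine ENNReal.ofReal_le_ofReal ?_
          have h1 : (1:ℝ) ≤ 1 + a ^ 2 := by nlinarith
          nlinarith [div_le_one_of_le₀ h1 (by positivity : (0:ℝ) ≤ 1 + a^2)]
      _ ≤ _ := by rw [← hval]; exact step1.trans step2
  · -- large a : compute the sin² integral
    have ha0 : 0 < a := by linarith
    have hrw : ∫⁻ t in Ioc (0:ℝ) 1, ENNReal.ofReal (t ^ 2 * sinc (t * a) ^ 2) =
        ∫⁻ t in Ioc (0:ℝ) 1, ENNReal.ofReal (Real.sin (t * a) ^ 2 / a ^ 2) := by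
      refine setLIntegral_congr_fun measurableSet_Ioc
        (fun t ht => ?_)
      have htne : t * a ≠ 0 := (mul_pos ht.1 ha0).ne'
      rw [sinc, if_neg htne]
      congr 1
      field_simp
      have := ht.1.ne'
      field_simp
    rw [hrw]
    have hint : ∫⁻ t in Ioc (0:ℝ) 1, ENNReal.ofReal (Real.sin (t * a) ^ 2 / a ^ 2) =
        ENNReal.ofReal ((a - Real.sin a * Real.cos a) / (2 * a ^ 3)) := by
      have hInt : IntegrableOn (fun t : ℝ => Real.sin (t * a) ^ 2 / a ^ 2) (Ioc 0 1) :=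
        Continuous.integrableOn_Ioc (by fun_prop)
      rw [← ofReal_integral_eq_lintegral_ofReal hInt
        (Filter.Eventually.of_forall fun t => by positivity)]
      congr 1
      rw [← intervalIntegral.integral_of_le (by norm_num : (0:ℝ) ≤ 1)]
      have : (∫ t in (0:ℝ)..1, Real.sin (t * a) ^ 2 / a ^ 2) =
          (∫ t in (0:ℝ)..1, Real.sin (t * a) ^ 2) / a ^ 2 :=
        intervalIntegral.integral_div _ _
      rw [this]
      simp only [intervalIntegral.integral_comp_mul_right (fun x => Real.sin x ^ 2) ha0.ne']
      rw [integral_sin_sq]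
      simp
      field_simp
      ring
    rw [hint]
    refine ENNReal.ofReal_le_ofReal ?_
    have hsc : Real.sin a * Real.cos a ≤ 1 := by
      nlinarith [Real.sin_le_one a, Real.cos_le_one a, Real.neg_one_le_sin a,
        Real.neg_one_le_cos a]
    have h1a : (1:ℝ) + a^2 ≠ 0 := by positivity
    have heq : (3:ℝ)/128 * (1/(1+a^2)) = 3 / (128 * (1 + a^2)) := by
      field_simp
    rw [heq, div_le_div_iff₀ (by positivity) (by positivity)]
    nlinarith [mul_pos (mul_pos ha0 ha0) ha0, sq_nonneg a,
      mul_pos (by linarith : (0:ℝ) < a - 2) (mul_pos ha0 ha0)]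

lemma upper_bound {T a t : ℝ} (ha : 0 ≤ a) (ht : 0 < t) (htT : t ≤ T) :
    t ^ 2 * sinc (t * a) ^ 2 ≤ (1 + T ^ 2) * (1 / (1 + a ^ 2)) := by
  have hT : 0 < T := ht.trans_le htT
  rcases le_or_gt (a ^ 2 * T ^ 2) 1 with hc | hc
  · have h1 : t ^ 2 * sinc (t * a) ^ 2 ≤ T ^ 2 := by
      have := sinc_sq_le_one (t * a)
      nlinarith [sq_nonneg (sinc (t * a)), sq_nonneg t, sq_nonneg T]
    have h2 : T ^ 2 ≤ (1 + T ^ 2) * (1 / (1 + a ^ 2)) := by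
      rw [mul_one_div, le_div_iff₀ (by positivity)]
      nlinarith
    linarith
  · have ha0 : 0 < a := by
      rcases eq_or_lt_of_le ha with h | h
      · exfalso; rw [← h] at hc; norm_num at hc
      · exact h
    have htne : t * a ≠ 0 := (mul_pos ht ha0).ne'
    have heq : t ^ 2 * sinc (t * a) ^ 2 = Real.sin (t * a) ^ 2 / a ^ 2 := by
      rw [sinc, if_neg htne]
      field_simp
    rw [heq]
    have h1 : Real.sin (t * a) ^ 2 / a ^ 2 ≤ 1 / a ^ 2 := by
      gcongr
      nlinarith [Real.sin_le_one (t * a), Real.neg_one_le_sin (t * a)]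
    have h2 : 1 / a ^ 2 ≤ (1 + T ^ 2) * (1 / (1 + a ^ 2)) := by
      rw [mul_one_div, div_le_div_iff₀ (by positivity) (by positivity)]
      nlinarith
    linarith

/-- The linear stochastic wave equation has a random-field solution iff Dalang's
condition holds: square integrability of `t sinc(t √ψ(ξ))` against `dt × μ(dξ)`
on `(0,T)` for all `T > 0` is equivalent to `∫ (1+ψ)^{-1} dμ < ∞`. -/
theorem stmt_15 (d : ℕ) (hd : 1 ≤ d)
    (ψ : EuclideanSpace ℝ (Fin d) → ℝ) (hψcont : Continuous ψ)
    (hψ0 : ∀ ξ, 0 ≤ ψ ξ)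
    (hpsiInf : Tendsto ψ (Filter.cocompact (EuclideanSpace ℝ (Fin d))) Filter.atTop)
    (μ : Measure (EuclideanSpace ℝ (Fin d))) [IsFiniteMeasureOnCompacts μ] :
    (∀ T : ℝ, 0 < T →
        (∫⁻ t in Ioc (0 : ℝ) T, ENNReal.ofReal (t ^ 2) *
          ∫⁻ ξ, ENNReal.ofReal (sinc (t * Real.sqrt (ψ ξ)) ^ 2) ∂μ) < ⊤) ↔
      (∫⁻ ξ, ENNReal.ofReal (1 / (1 + ψ ξ)) ∂μ) < ⊤ := by
  have hsq : ∀ ξ, Real.sqrt (ψ ξ) ^ 2 = ψ ξ := fun ξ => Real.sq_sqrt (hψ0 ξ)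
  have hmeasF : Measurable
      (fun p : ℝ × EuclideanSpace ℝ (Fin d) =>
        ENNReal.ofReal (p.1 ^ 2 * sinc (p.1 * Real.sqrt (ψ p.2)) ^ 2)) := by
    refine Measurable.ennreal_ofReal ?_
    refine ((measurable_fst.pow_const 2).mul ?_)
    exact (measurable_sinc.comp
      (measurable_fst.mul ((hψcont.measurable.comp measurable_snd).sqrt))).pow_const 2
  -- rewrite the inner product-integral
  have hinner : ∀ T : ℝ,
      (∫⁻ t in Ioc (0 : ℝ) T, ENNReal.ofReal (t ^ 2) *
          ∫⁻ ξ, ENNReal.ofReal (sinc (t * Real.sqrt (ψ ξ)) ^ 2) ∂μ) =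
      ∫⁻ t in Ioc (0 : ℝ) T,
          ∫⁻ ξ, ENNReal.ofReal (t ^ 2 * sinc (t * Real.sqrt (ψ ξ)) ^ 2) ∂μ := by
    intro T
    refine setLIntegral_congr_fun measurableSet_Ioc
      (fun t ht => ?_)
    rw [← lintegral_const_mul' _ _ ENNReal.ofReal_ne_top]
    exact lintegral_congr fun ξ => (ENNReal.ofReal_mul (sq_nonneg t)).symm
  constructor
  · intro h
    have hI := h 1 one_pos
    rw [hinner 1] at hI
    rw [lintegral_lintegral_swap hmeasF.aemeasurable] at hI
    have hlow : ENNReal.ofReal (3 / 128) * ∫⁻ ξ, ENNReal.ofReal (1 / (1 + ψ ξ)) ∂μ ≤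
        ∫⁻ ξ, ∫⁻ t in Ioc (0 : ℝ) 1,
          ENNReal.ofReal (t ^ 2 * sinc (t * Real.sqrt (ψ ξ)) ^ 2) ∂volume ∂μ := by
      rw [← lintegral_const_mul' _ _ ENNReal.ofReal_ne_top]
      refine lintegral_mono fun ξ => ?_
      have := lintegral_lower (Real.sqrt_nonneg (ψ ξ))
      rwa [hsq ξ] at this
    have hfin : ENNReal.ofReal (3 / 128) * ∫⁻ ξ, ENNReal.ofReal (1 / (1 + ψ ξ)) ∂μ < ⊤ :=
      hlow.trans_lt hI
    have hc0 : ENNReal.ofReal (3 / 128) ≠ 0 := by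
      simp [ENNReal.ofReal_eq_zero]
    exact ENNReal.lt_top_of_mul_ne_top_right hfin.ne hc0
  · intro hJ T hT
    rw [hinner T]
    have hbound : ∀ t ∈ Ioc (0 : ℝ) T,
        (∫⁻ ξ, ENNReal.ofReal (t ^ 2 * sinc (t * Real.sqrt (ψ ξ)) ^ 2) ∂μ) ≤
          ENNReal.ofReal (1 + T ^ 2) * ∫⁻ ξ, ENNReal.ofReal (1 / (1 + ψ ξ)) ∂μ := by
      intro t ht
      rw [← lintegral_const_mul' _ _ ENNReal.ofReal_ne_top]
      refine lintegral_mono fun ξ => ?_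
      rw [← ENNReal.ofReal_mul (by positivity)]
      refine ENNReal.ofReal_le_ofReal ?_
      have := upper_bound (Real.sqrt_nonneg (ψ ξ)) ht.1 ht.2
      rwa [hsq ξ] at this
    calc (∫⁻ t in Ioc (0 : ℝ) T,
          ∫⁻ ξ, ENNReal.ofReal (t ^ 2 * sinc (t * Real.sqrt (ψ ξ)) ^ 2) ∂μ)
        ≤ ∫⁻ _t in Ioc (0 : ℝ) T,
            (ENNReal.ofReal (1 + T ^ 2) * ∫⁻ ξ, ENNReal.ofReal (1 / (1 + ψ ξ)) ∂μ) :=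
          setLIntegral_mono_ae (by fun_prop)
            (Filter.Eventually.of_forall hbound)
      _ = (ENNReal.ofReal (1 + T ^ 2) * ∫⁻ ξ, ENNReal.ofReal (1 / (1 + ψ ξ)) ∂μ) *
            volume (Ioc (0 : ℝ) T) := setLIntegral_const _ _
      _ < ⊤ := by
          refine ENNReal.mul_lt_top (ENNReal.mul_lt_top ENNReal.ofReal_lt_top hJ) ?_
          simp [Real.volume_Ioc]
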